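/- arXiv:2410.22269 — 3 statements merged into one kernel-verified Lean document; each statement's English description precedes it below -/
import Mathlib

section
/- Let m ≥ 1 be an integer, let σ > 0, let z ∈ ℝ, and let f : ℝ → ℝ be nonnegative, continuously differentiable, and 2-periodic. Then, with P_1(s) = s − ⌊s⌋ − 1/2, the Euler–Maclaurin error term satisfies |(1/S(m,σ)) ∫_{−m}^{m} (d/ds)[G_σ(s) f(z − 2s/m)] · P_1(s) ds| ≤ (m/(2σ²)) · (g̃_σ ∗ f)(z) + (1/m) · (g̃_σ ∗ |f′|)(z). -/
/-- Gaussian density with standard deviation `σ`. -/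
noncomputable def G (σ z : ℝ) : ℝ :=
  Real.exp (-z ^ 2 / (2 * σ ^ 2)) / (Real.sqrt (2 * Real.pi) * σ)

/-- Normalization constant `S(m,σ) = ∑_{k=1-m}^{m-1} G_σ(k)`. -/
noncomputable def S (m : ℕ) (σ : ℝ) : ℝ :=
  ∑ k ∈ Finset.Icc (1 - (m : ℤ)) ((m : ℤ) - 1), G σ (k : ℝ)

/-- Continuous Gaussian filter `g̃_σ(u) = (m/(2S(m,σ))) G_σ(mu/2)`. -/
noncomputable def contFilter (m : ℕ) (σ : ℝ) (u : ℝ) : ℝ :=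
  (m / (2 * S m σ)) * G σ (m * u / 2)

/-- Continuous convolution `(g̃_σ ∗ f)(z) = ∫_{-2}^{2} g̃_σ(u) f(z-u) du`. -/
noncomputable def contConv (m : ℕ) (σ : ℝ) (f : ℝ → ℝ) (z : ℝ) : ℝ :=
  ∫ u in (-2 : ℝ)..2, contFilter m σ u * f (z - u)

/-- Periodized Bernoulli polynomial `P₁(s) = s - ⌊s⌋ - 1/2`. -/
noncomputable def P1 (s : ℝ) : ℝ := s - ⌊s⌋ - 1 / 2

/-- Euler–Maclaurin error term. -/
noncomputable def eulerErr (m : ℕ) (σ : ℝ) (f : ℝ → ℝ) (z : ℝ) : ℝ :=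
  (1 / S m σ) *
    ∫ s in (-(m : ℝ))..(m : ℝ), deriv (fun s : ℝ => G σ s * f (z - 2 * s / m)) s * P1 s

lemma G_pos {σ : ℝ} (hσ : 0 < σ) (x : ℝ) : 0 < G σ x := by
  unfold G
  have h2π : (0:ℝ) < Real.sqrt (2 * Real.pi) := Real.sqrt_pos.2 (by positivity)
  positivity

lemma G_cont (σ : ℝ) : Continuous (G σ) := by
  unfold G; fun_prop

lemma hasDerivAt_G {σ : ℝ} (hσ : 0 < σ) (s : ℝ) :
    HasDerivAt (G σ) (-s / σ ^ 2 * G σ s) s := by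
  have h0 : HasDerivAt (fun x : ℝ => -x ^ 2 / (2 * σ ^ 2)) (-s / σ ^ 2) s := by
    have h := ((hasDerivAt_pow 2 s).neg.div_const (2 * σ ^ 2))
    refine h.congr_deriv ?_
    have : σ ^ 2 ≠ 0 := by positivity
    field_simp
    ring
  have h2 := (h0.exp).div_const (Real.sqrt (2 * Real.pi) * σ)
  have h3 : -s / σ ^ 2 * G σ s =
      Real.exp (-s ^ 2 / (2 * σ ^ 2)) * (-s / σ ^ 2) / (Real.sqrt (2 * Real.pi) * σ) := by
    unfold G; ring
  rw [h3]
  exact h2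

lemma P1_eq (s : ℝ) : P1 s = Int.fract s - 1 / 2 := by
  rw [P1, ← Int.self_sub_floor]

lemma abs_P1_le (s : ℝ) : |P1 s| ≤ 1 / 2 := by
  rw [P1_eq]
  have h1 := Int.fract_nonneg s
  have h2 := Int.fract_lt_one s
  rw [abs_le]; constructor <;> linarith

lemma P1_measurable : Measurable P1 := by
  have : P1 = fun s => Int.fract s - 1 / 2 := funext P1_eq
  rw [this]
  exact measurable_fract.sub measurable_const

/-- the Euler–Maclaurin error term satisfies
`|E(m,σ)| ≤ (m/(2σ²)) (g̃_σ ∗ f)(z) + (1/m) (g̃_σ ∗ |f'|)(z)`. -/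
theorem eulerErr_bound
    (m : ℕ) (hm : 1 ≤ m) (σ : ℝ) (hσ : 0 < σ) (z : ℝ)
    (f : ℝ → ℝ) (hf0 : ∀ x : ℝ, 0 ≤ f x) (hf : ContDiff ℝ 1 f)
    (hper : ∀ x : ℝ, f (x + 2) = f x) :
    |eulerErr m σ f z| ≤
      ((m : ℝ) / (2 * σ ^ 2)) * contConv m σ f z
        + (1 / (m : ℝ)) * contConv m σ (fun x => |deriv f x|) z := by
  have hm0 : (0:ℝ) < m := by exact_mod_cast hm
  have hmne : (m:ℝ) ≠ 0 := ne_of_gt hm0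
  have hS : 0 < S m σ := by
    unfold S
    apply Finset.sum_pos (fun k _ => G_pos hσ _)
    exact ⟨0, by simp [Finset.mem_Icc]; omega⟩
  have hSne : S m σ ≠ 0 := ne_of_gt hS
  have hdf : Differentiable ℝ f := hf.differentiable one_ne_zero
  have hdf' : Continuous (deriv f) := hf.continuous_deriv le_rfl
  set φ : ℝ → ℝ := fun s =>
    (-s / σ ^ 2 * G σ s) * f (z - 2 * s / m)
      + G σ s * (deriv f (z - 2 * s / m) * (-(2 / m))) with hφ
  -- derivative formula
  have hD : ∀ s : ℝ, HasDerivAt (fun s : ℝ => G σ s * f (z - 2 * s / m)) (φ s) s := by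
    intro s
    have h1 := hasDerivAt_G hσ s
    have h2 : HasDerivAt (fun s : ℝ => z - 2 * s / m) (-(2 / m)) s := by
      have := (((hasDerivAt_id s).const_mul (2:ℝ)).div_const (m:ℝ)).const_sub z
      simpa using this
    have h3 := (hdf (z - 2 * s / m)).hasDerivAt.comp s h2
    exact h1.mul h3
  have hDeq : ∀ s : ℝ, deriv (fun s : ℝ => G σ s * f (z - 2 * s / m)) s = φ s :=
    fun s => (hD s).deriv
  -- substitution lemma
  have hsub : ∀ g : ℝ → ℝ, Continuous g →
      contConv m σ g z = (1 / S m σ) * ∫ s in (-(m:ℝ))..(m:ℝ), G σ s * g (z - 2 * s / m) := by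
    intro g hg
    have hc : (2:ℝ) / m ≠ 0 := by positivity
    have key := intervalIntegral.integral_comp_mul_left
      (a := (-(m:ℝ))) (b := (m:ℝ)) (fun u => contFilter m σ u * g (z - u)) hc
    have e1 : (2:ℝ) / m * (-(m:ℝ)) = -2 := by field_simp
    have e2 : (2:ℝ) / m * (m:ℝ) = 2 := by field_simp
    rw [e1, e2] at key
    have hCF : ∀ s : ℝ, contFilter m σ (2 / m * s) * g (z - 2 / m * s)
        = (m / (2 * S m σ)) * (G σ s * g (z - 2 * s / m)) := by
      intro s
      unfold contFilter
      rw [show (m:ℝ) * (2 / m * s) / 2 = s by field_simp,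
        show z - 2 / m * s = z - 2 * s / m by ring]
      ring
    simp only [hCF] at key
    rw [intervalIntegral.integral_const_mul] at key
    unfold contConv
    rw [smul_eq_mul] at key
    have h4 : (∫ u in (-2:ℝ)..2, contFilter m σ u * g (z - u))
        = (2 / (m:ℝ)) * ((2 / (m:ℝ))⁻¹ * ∫ u in (-2:ℝ)..2, contFilter m σ u * g (z - u)) := by
      field_simp
    rw [h4, ← key]
    field_simp
  -- the integrand rewritten
  set ψ : ℝ → ℝ := fun s => P1 s * φ s with hψ
  have hGc := G_cont σ
  have hφc : Continuous φ := by
    apply Continuous.add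
    · exact ((continuous_id.neg.div_const _).mul hGc).mul
        (hf.continuous.comp (by fun_prop))
    · exact hGc.mul ((hdf'.comp (by fun_prop)).mul continuous_const)
  -- bound function
  set B : ℝ → ℝ := fun s =>
    ((m:ℝ) / (2 * σ ^ 2)) * (G σ s * f (z - 2 * s / m))
      + (1 / m) * (G σ s * |deriv f (z - 2 * s / m)|) with hB
  have hBc : Continuous B := by
    apply Continuous.add
    · exact continuous_const.mul (hGc.mul (hf.continuous.comp (by fun_prop)))
    · exact continuous_const.mul (hGc.mul ((hdf'.comp (by fun_prop)).abs))
  have hbound : ∀ s ∈ Set.Icc (-(m:ℝ)) (m:ℝ), |ψ s| ≤ B s := by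
    intro s hs
    have hGp : 0 < G σ s := G_pos hσ s
    have hsm : |s| ≤ m := abs_le.2 ⟨hs.1, hs.2⟩
    have h1 : |φ s| ≤ ((m:ℝ) / σ ^ 2) * (G σ s * f (z - 2 * s / m))
        + (2 / m) * (G σ s * |deriv f (z - 2 * s / m)|) := by
      have ht := abs_add_le ((-s / σ ^ 2 * G σ s) * f (z - 2 * s / m))
        (G σ s * (deriv f (z - 2 * s / m) * (-(2 / m))))
      have e1 : |(-s / σ ^ 2 * G σ s) * f (z - 2 * s / m)|
          = (|s| / σ ^ 2) * (G σ s * f (z - 2 * s / m)) := by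
        rw [abs_mul, abs_mul, abs_div, abs_neg, abs_of_nonneg (hf0 _),
          abs_of_pos hGp, abs_of_pos (pow_pos hσ 2)]
        ring
      have e2 : |G σ s * (deriv f (z - 2 * s / m) * (-(2 / m)))|
          = (2 / m) * (G σ s * |deriv f (z - 2 * s / m)|) := by
        rw [abs_mul, abs_mul, abs_neg, abs_of_pos hGp,
          abs_of_pos (div_pos two_pos hm0)]
        ring
      rw [e1, e2] at ht
      simp only [hφ]
      refine ht.trans (add_le_add ?_ le_rfl)
      have hss : |s| / σ ^ 2 ≤ (m:ℝ) / σ ^ 2 := by gcongr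
      exact mul_le_mul_of_nonneg_right hss
        (mul_nonneg (le_of_lt (G_pos hσ s)) (hf0 _))
    calc |ψ s| = |φ s| * |P1 s| := by rw [hψ]; simp [abs_mul, mul_comm]
      _ ≤ (((m:ℝ) / σ ^ 2) * (G σ s * f (z - 2 * s / m))
            + (2 / m) * (G σ s * |deriv f (z - 2 * s / m)|)) * (1 / 2) :=
        mul_le_mul h1 (abs_P1_le s) (abs_nonneg _)
          (add_nonneg
            (mul_nonneg (by positivity) (mul_nonneg (G_pos hσ s).le (hf0 _)))
            (mul_nonneg (by positivity) (mul_nonneg (G_pos hσ s).le (abs_nonneg _))))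
      _ = B s := by rw [hB]; ring
  -- integrability
  have hab : (-(m:ℝ)) ≤ (m:ℝ) := by linarith
  have hψint : IntervalIntegrable ψ MeasureTheory.volume (-(m:ℝ)) (m:ℝ) := by
    have hφint : IntervalIntegrable φ MeasureTheory.volume (-(m:ℝ)) (m:ℝ) :=
      hφc.intervalIntegrable _ _
    constructor
    · exact hφint.1.bdd_mul P1_measurable.aestronglyMeasurable
        (c := 1 / 2) (MeasureTheory.ae_of_all _ fun x => by simpa using abs_P1_le x)
    · exact hφint.2.bdd_mul P1_measurable.aestronglyMeasurable
        (c := 1 / 2) (MeasureTheory.ae_of_all _ fun x => by simpa using abs_P1_le x)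
  have hBint : IntervalIntegrable B MeasureTheory.volume (-(m:ℝ)) (m:ℝ) :=
    hBc.intervalIntegrable _ _
  -- main integral inequality
  have hineq : |∫ s in (-(m:ℝ))..(m:ℝ), ψ s| ≤ ∫ s in (-(m:ℝ))..(m:ℝ), B s := by
    calc |∫ s in (-(m:ℝ))..(m:ℝ), ψ s| ≤ ∫ s in (-(m:ℝ))..(m:ℝ), |ψ s| :=
          intervalIntegral.abs_integral_le_integral_abs hab
      _ ≤ ∫ s in (-(m:ℝ))..(m:ℝ), B s :=
          intervalIntegral.integral_mono_on hab hψint.abs hBint hbound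
  -- compute ∫ B
  have hBsplit : (∫ s in (-(m:ℝ))..(m:ℝ), B s)
      = ((m:ℝ) / (2 * σ ^ 2)) * (∫ s in (-(m:ℝ))..(m:ℝ), G σ s * f (z - 2 * s / m))
        + (1 / m) * (∫ s in (-(m:ℝ))..(m:ℝ), G σ s * |deriv f (z - 2 * s / m)|) := by
    have hlin : Continuous fun s : ℝ => z - 2 * s / (m:ℝ) := by fun_prop
    have i1 : IntervalIntegrable (fun s : ℝ => ((m:ℝ) / (2 * σ ^ 2)) * (G σ s * f (z - 2 * s / m)))
        MeasureTheory.volume (-(m:ℝ)) (m:ℝ) :=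
      (continuous_const.mul (hGc.mul (hf.continuous.comp hlin))).intervalIntegrable _ _
    have i2 : IntervalIntegrable
        (fun s : ℝ => (1 / (m:ℝ)) * (G σ s * |deriv f (z - 2 * s / m)|))
        MeasureTheory.volume (-(m:ℝ)) (m:ℝ) :=
      (continuous_const.mul (hGc.mul ((hdf'.comp hlin).abs))).intervalIntegrable _ _
    simp only [hB]
    rw [intervalIntegral.integral_add i1 i2,
      intervalIntegral.integral_const_mul, intervalIntegral.integral_const_mul]
  -- rewrite eulerErr
  have herr : eulerErr m σ f z = (1 / S m σ) * ∫ s in (-(m:ℝ))..(m:ℝ), ψ s := by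
    unfold eulerErr
    congr 1
    apply intervalIntegral.integral_congr
    intro s _
    simp only [hψ, hDeq]
    ring
  rw [herr, hsub f hf.continuous, hsub (fun x => |deriv f x|) hdf'.abs]
  rw [abs_mul, abs_of_pos (by positivity : (0:ℝ) < 1 / S m σ)]
  calc (1 / S m σ) * |∫ s in (-(m:ℝ))..(m:ℝ), ψ s|
      ≤ (1 / S m σ) * (∫ s in (-(m:ℝ))..(m:ℝ), B s) :=
        mul_le_mul_of_nonneg_left hineq (by positivity)
    _ = ((m:ℝ) / (2 * σ ^ 2)) * ((1 / S m σ) *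
          ∫ s in (-(m:ℝ))..(m:ℝ), G σ s * f (z - 2 * s / m))
        + (1 / (m:ℝ)) * ((1 / S m σ) *
          ∫ s in (-(m:ℝ))..(m:ℝ), G σ s * |deriv f (z - 2 * s / m)|) := by
        rw [hBsplit]; ring
end

section
/- Let N ≥ 0 be an integer and let a_0, …, a_N ∈ ℂ, not all zero. Define c_k = ∑_{ℓ=0}^{N−k} a_ℓ · conj(a_{ℓ+k}) for 0 ≤ k ≤ N (so c_0 = ∑_{ℓ=0}^{N} |a_ℓ|² is real and positive), and define p : ℝ → ℝ by p(z) = 1/2 + Re(∑_{k=1}^{N} (c_k/c_0) e^{iπkz}). Then p is a probability density on [−1,1]: p(z) ≥ 0 for all z ∈ ℝ, and ∫_{−1}^{1} p(z) dz = 1. Moreover p(z) = |∑_{ℓ=0}^{N} a_ℓ e^{−iπℓz}|² / (2 c_0). -/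
open Complex Finset


lemma square_split (n : ℕ) (g : ℕ → ℕ → ℂ) :
    ∑ l ∈ range n, ∑ m ∈ range n, g l m
      = ∑ l ∈ range n, g l l + ∑ m ∈ range n, ∑ l ∈ range m, (g l m + g m l) := by
  induction n with
  | zero => simp
  | succ n ih =>
    simp only [Finset.sum_range_succ, Finset.sum_add_distrib] at *
    rw [ih]; ring

lemma sum_upper_tri (n : ℕ) (f : ℕ → ℕ → ℂ) :
    ∑ k ∈ Icc 1 n, ∑ l ∈ range (n + 1 - k), f l (l + k)
      = ∑ m ∈ range (n + 1), ∑ l ∈ range m, f l m := by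
  rw [Finset.sum_sigma', Finset.sum_sigma']
  apply Finset.sum_nbij' (fun x => (⟨x.2 + x.1, x.2⟩ : Σ _ : ℕ, ℕ))
    (fun x => (⟨x.1 - x.2, x.2⟩ : Σ _ : ℕ, ℕ))
  · rintro ⟨k, l⟩ h
    simp only [Finset.mem_sigma, Finset.mem_Icc, Finset.mem_range] at *
    omega
  · rintro ⟨m, l⟩ h
    simp only [Finset.mem_sigma, Finset.mem_Icc, Finset.mem_range] at *
    omega
  · rintro ⟨k, l⟩ h
    simp [Nat.add_sub_cancel_left]
  · rintro ⟨m, l⟩ h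
    simp only [Finset.mem_sigma, Finset.mem_Icc, Finset.mem_range] at h
    have hl : l ≤ m := le_of_lt h.2
    simp [Nat.add_sub_cancel' hl]
  · rintro ⟨k, l⟩ h
    rfl

lemma key_identity (N : ℕ) (a c : ℕ → ℂ)
    (hc : ∀ k : ℕ, k ≤ N →
      c k = ∑ l ∈ range (N + 1 - k), a l * starRingEnd ℂ (a (l + k)))
    (z : ℝ) :
    (∑ l ∈ range (N + 1), a l * Complex.exp (-Complex.I * (Real.pi : ℂ) * l * z)) *
      starRingEnd ℂ
        (∑ l ∈ range (N + 1), a l * Complex.exp (-Complex.I * (Real.pi : ℂ) * l * z))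
    = c 0 + ∑ k ∈ Icc 1 N,
        (c k * Complex.exp (Complex.I * (Real.pi : ℂ) * k * z)
          + starRingEnd ℂ (c k * Complex.exp (Complex.I * (Real.pi : ℂ) * k * z))) := by
  set g : ℕ → ℕ → ℂ := fun l m =>
    a l * starRingEnd ℂ (a m) *
      Complex.exp (Complex.I * (Real.pi : ℂ) * ((m : ℂ) - (l : ℂ)) * z) with hg
  have hterm : ∀ l m : ℕ,
      (a l * Complex.exp (-Complex.I * (Real.pi : ℂ) * l * z)) *
        starRingEnd ℂ (a m * Complex.exp (-Complex.I * (Real.pi : ℂ) * m * z)) = g l m := by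
    intro l m
    rw [map_mul, ← Complex.exp_conj]
    have : starRingEnd ℂ (-Complex.I * (Real.pi : ℂ) * m * z)
        = Complex.I * (Real.pi : ℂ) * m * z := by
      simp [map_mul, Complex.conj_I]
    rw [this, hg]
    rw [show (a l * Complex.exp (-Complex.I * ↑Real.pi * ↑l * ↑z) *
        (starRingEnd ℂ (a m) * Complex.exp (Complex.I * ↑Real.pi * ↑m * ↑z)))
      = a l * starRingEnd ℂ (a m) * (Complex.exp (-Complex.I * ↑Real.pi * ↑l * ↑z) *
        Complex.exp (Complex.I * ↑Real.pi * ↑m * ↑z)) from by ring, ← Complex.exp_add]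
    congr 1
    ring
  have expand :
      (∑ l ∈ range (N + 1), a l * Complex.exp (-Complex.I * (Real.pi : ℂ) * l * z)) *
        starRingEnd ℂ
          (∑ l ∈ range (N + 1), a l * Complex.exp (-Complex.I * (Real.pi : ℂ) * l * z))
      = ∑ l ∈ range (N + 1), ∑ m ∈ range (N + 1), g l m := by
    rw [map_sum, Finset.sum_mul_sum]
    exact Finset.sum_congr rfl fun l _ => Finset.sum_congr rfl fun m _ => hterm l m
  rw [expand, square_split]
  congr 1
  · rw [hc 0 (Nat.zero_le N)]
    simp [hg]
  · rw [← sum_upper_tri N (fun l m => g l m + g m l)]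
    refine Finset.sum_congr rfl fun k hk => ?_
    rw [Finset.sum_add_distrib, hc k (Finset.mem_Icc.mp hk).2]
    congr 1
    · rw [Finset.sum_mul]
      refine Finset.sum_congr rfl fun l _ => ?_
      simp only [hg]
      congr 2
      push_cast; ring
    · rw [map_mul, map_sum, Finset.sum_mul]
      refine Finset.sum_congr rfl fun l _ => ?_
      simp only [hg]
      rw [map_mul, ← Complex.exp_conj]
      have : starRingEnd ℂ (Complex.I * (Real.pi : ℂ) * k * z)
          = Complex.I * (Real.pi : ℂ) * (((l : ℂ)) - ((l : ℂ) + (k : ℂ))) * z := by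
        simp only [map_mul, Complex.conj_I, Complex.conj_ofReal, Complex.conj_natCast]
        ring
      rw [this]
      rw [Complex.conj_conj]
      push_cast
      ring

lemma exp_integral_zero (k : ℕ) (hk : 1 ≤ k) :
    (∫ z : ℝ in (-1 : ℝ)..1, Complex.exp (Complex.I * (Real.pi : ℂ) * k * z)) = 0 := by
  have hc : (Complex.I * (Real.pi : ℂ) * k : ℂ) ≠ 0 := by
    have hk0 : k ≠ 0 := by omega
    simp [Complex.I_ne_zero, Real.pi_ne_zero, hk0, Complex.ext_iff]
  have := integral_exp_mul_complex (a := (-1 : ℝ)) (b := (1 : ℝ)) hc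
  rw [show (∫ z : ℝ in (-1 : ℝ)..1, Complex.exp (Complex.I * (Real.pi : ℂ) * k * z))
      = ∫ z : ℝ in (-1 : ℝ)..1, Complex.exp ((Complex.I * (Real.pi : ℂ) * k) * z) from rfl,
    this]
  rw [div_eq_zero_iff]
  left
  rw [sub_eq_zero]
  have h1 : (Complex.I * (Real.pi : ℂ) * k * ((1 : ℝ) : ℂ)) = ((Real.pi * k : ℝ) : ℂ) * Complex.I := by
    push_cast; ring
  have h2 : (Complex.I * (Real.pi : ℂ) * k * ((-1 : ℝ) : ℂ)) = (-(Real.pi * k : ℝ) : ℂ) * Complex.I := by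
    push_cast; ring
  rw [h1, h2, Complex.exp_mul_I, Complex.exp_mul_I]
  have hs : Complex.sin ((Real.pi * k : ℝ) : ℂ) = 0 := by
    rw [← Complex.ofReal_sin]
    norm_cast
    rw [mul_comm]
    exact Real.sin_nat_mul_pi k
  have hs' : Complex.sin (-((Real.pi * k : ℝ) : ℂ)) = 0 := by
    rw [Complex.sin_neg, hs, neg_zero]
  have hcc : Complex.cos (-((Real.pi * k : ℝ) : ℂ)) = Complex.cos ((Real.pi * k : ℝ) : ℂ) :=
    Complex.cos_neg _
  push_cast at hs hs' hcc ⊢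
  rw [hs, hs', hcc]

/-- the Fourier head's learned function is a valid probability density:
with `c_k = ∑_{ℓ=0}^{N-k} a_ℓ conj(a_{ℓ+k})` and
`p(z) = 1/2 + Re(∑_{k=1}^{N} (c_k/c_0) e^{iπkz})`, the function `p` is nonnegative,
integrates to `1` over `[-1,1]`, and equals `|∑_{ℓ=0}^{N} a_ℓ e^{-iπℓz}|² / (2c_0)`. -/
theorem fourier_head_pdf
    (N : ℕ) (a : ℕ → ℂ) (ha : ∃ l ≤ N, a l ≠ 0) (c : ℕ → ℂ)
    (hc : ∀ k : ℕ, k ≤ N →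
      c k = ∑ l ∈ Finset.range (N + 1 - k), a l * starRingEnd ℂ (a (l + k)))
    (p : ℝ → ℝ)
    (hp : ∀ z : ℝ, p z = 1 / 2 +
      (∑ k ∈ Finset.Icc 1 N,
        (c k / c 0) * Complex.exp (Complex.I * (Real.pi : ℂ) * (k : ℂ) * (z : ℂ))).re) :
    (∀ z : ℝ, 0 ≤ p z) ∧
    (∫ z in (-1 : ℝ)..1, p z) = 1 ∧
    (∀ z : ℝ, p z =
      ‖∑ l ∈ Finset.range (N + 1),
          a l * Complex.exp (-(Complex.I) * (Real.pi : ℂ) * (l : ℂ) * (z : ℂ))‖ ^ 2 /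
        (2 * (c 0).re)) := by
  -- c 0 is a positive real
  set r : ℝ := ∑ l ∈ range (N + 1), Complex.normSq (a l) with hrdef
  have hc0 : c 0 = (r : ℂ) := by
    rw [hc 0 (Nat.zero_le N)]
    simp only [Nat.sub_zero, Nat.add_zero, hrdef]
    push_cast
    exact Finset.sum_congr rfl fun l _ => (Complex.mul_conj (a l))
  have hr : 0 < r := by
    obtain ⟨l, hl, hal⟩ := ha
    exact Finset.sum_pos' (fun i _ => Complex.normSq_nonneg _)
      ⟨l, Finset.mem_range.mpr (Nat.lt_succ_of_le hl), Complex.normSq_pos.mpr hal⟩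
  have hc0re : (c 0).re = r := by rw [hc0]; simp
  -- the third claim, from which nonnegativity follows
  have hthird : ∀ z : ℝ, p z =
      ‖∑ l ∈ Finset.range (N + 1),
          a l * Complex.exp (-(Complex.I) * (Real.pi : ℂ) * (l : ℂ) * (z : ℂ))‖ ^ 2 /
        (2 * (c 0).re) := by
    intro z
    set S : ℂ := ∑ l ∈ Finset.range (N + 1),
        a l * Complex.exp (-(Complex.I) * (Real.pi : ℂ) * (l : ℂ) * (z : ℂ)) with hS
    have hkey := key_identity N a c hc z
    have hnorm : S * starRingEnd ℂ S = (Complex.normSq S : ℂ) := Complex.mul_conj S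
    have hre : Complex.normSq S
        = r + 2 * (∑ k ∈ Icc 1 N,
            (c k * Complex.exp (Complex.I * (Real.pi : ℂ) * k * z))).re := by
      have := congrArg Complex.re (hnorm.symm.trans hkey)
      simp only [Complex.ofReal_re, Complex.add_re, hc0re, Complex.re_sum,
        Complex.add_re, Complex.conj_re] at this ⊢
      rw [this, Finset.mul_sum]
      congr 1
      refine Finset.sum_congr rfl fun k _ => ?_
      ring
    have hpz : p z = 1 / 2 + (∑ k ∈ Icc 1 N,
        (c k * Complex.exp (Complex.I * (Real.pi : ℂ) * k * z))).re / r := by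
      rw [hp z]
      congr 1
      rw [Complex.re_sum, Complex.re_sum, Finset.sum_div]
      refine Finset.sum_congr rfl fun k _ => ?_
      rw [hc0, div_mul_eq_mul_div, Complex.div_ofReal_re]
    rw [hpz, Complex.sq_norm, hre, hc0re]
    field_simp
    simp only [show ∀ k : ℕ, Complex.I * (Real.pi : ℂ) * (z : ℂ) * (k : ℂ)
      = Complex.I * (Real.pi : ℂ) * (k : ℂ) * (z : ℂ) from fun k => by ring]
  refine ⟨?_, ?_, hthird⟩
  · intro z
    rw [hthird z, hc0re]
    positivity
  · -- the integral
    have hcont : ∀ k : ℕ, Continuous fun z : ℝ =>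
        (c k / c 0) * Complex.exp (Complex.I * (Real.pi : ℂ) * (k : ℂ) * (z : ℂ)) := by
      intro k
      fun_prop
    have hint : ∀ k : ℕ, IntervalIntegrable (fun z : ℝ =>
        (c k / c 0) * Complex.exp (Complex.I * (Real.pi : ℂ) * (k : ℂ) * (z : ℂ)))
        MeasureTheory.volume (-1 : ℝ) 1 := fun k => (hcont k).intervalIntegrable _ _
    set F : ℝ → ℂ := fun z => ∑ k ∈ Finset.Icc 1 N,
        (c k / c 0) * Complex.exp (Complex.I * (Real.pi : ℂ) * (k : ℂ) * (z : ℂ)) with hF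
    have hFint : IntervalIntegrable F MeasureTheory.volume (-1 : ℝ) 1 := by
      apply Continuous.intervalIntegrable
      exact continuous_finset_sum _ fun k _ => hcont k
    have hFcont : Continuous F := continuous_finset_sum _ fun k _ => hcont k
    have hFreInt : IntervalIntegrable (fun z => (F z).re) MeasureTheory.volume (-1 : ℝ) 1 :=
      (Complex.continuous_re.comp hFcont).intervalIntegrable _ _
    have hIF : (∫ z in (-1 : ℝ)..1, F z) = 0 := by
      simp only [hF]
      rw [intervalIntegral.integral_finset_sum (fun k _ => hint k)]
      refine Finset.sum_eq_zero fun k hk => ?_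
      rw [intervalIntegral.integral_const_mul, exp_integral_zero k (Finset.mem_Icc.mp hk).1,
        mul_zero]
    have hre : (∫ z in (-1 : ℝ)..1, (F z).re) = 0 := by
      have := Complex.reCLM.intervalIntegral_comp_comm hFint
      simp only [Complex.reCLM_apply] at this
      rw [this, hIF]
      simp
    calc (∫ z in (-1 : ℝ)..1, p z) = ∫ z in (-1 : ℝ)..1, (1 / 2 + (F z).re) := by
          refine intervalIntegral.integral_congr fun z _ => ?_
          rw [hp z]
      _ = (∫ _ in (-1 : ℝ)..1, (1 / 2 : ℝ)) + ∫ z in (-1 : ℝ)..1, (F z).re := by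
          rw [intervalIntegral.integral_add intervalIntegrable_const hFreInt]
      _ = 1 := by rw [hre]; simp; norm_num
end

section
/- Let m and N be integers with 0 < N < m/2, let σ > 0, let B ∈ ℝ, and let f_N(z) = ∑_{k=−N}^{N} a_k e^{iπkz} be a trigonometric polynomial with a_{−k} = conj(a_k) (so f_N is real-valued). Then ∑_{j=0}^{m−1} |B · f_N(b_j) − (g̃_σ ∗ f_N)(b_j)|² = m · ∑_{k=−N}^{N} |a_k|² · |B − ĥ_{σ,k}|², where b_j = −1 + (2j+1)/m and ĥ_{σ,k} = ∫_{−2}^{2} g̃_σ(u) e^{−iπku} du. -/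
/-- Centerpoints `b_j = -1 + (2j+1)/m` of the `m` uniform bins partitioning `[-1,1]`. -/
noncomputable def binCenter (m : ℕ) (j : ℤ) : ℝ := -1 + (2 * (j : ℝ) + 1) / m

/-- Trigonometric polynomial `f_N(z) = ∑_{k=-N}^{N} a_k e^{iπkz}`. -/
noncomputable def truncFourier (a : ℤ → ℂ) (N : ℕ) (z : ℝ) : ℂ :=
  ∑ k ∈ Finset.Icc (-(N : ℤ)) (N : ℤ),
    a k * Complex.exp (Complex.I * (Real.pi : ℂ) * (k : ℂ) * (z : ℂ))

/- ## Auxiliary lemmas -/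

lemma sum_exp_zero_aux (m : ℕ) (hm : 0 < m) (d : ℤ) (hd : d ≠ 0) (hdm : d.natAbs < m) :
    ∑ j ∈ Finset.range m,
      Complex.exp (Complex.I * (Real.pi : ℂ) * (d : ℂ) * ((binCenter m j : ℝ) : ℂ)) = 0 := by
  have hm0 : (m : ℂ) ≠ 0 := Nat.cast_ne_zero.mpr hm.ne'
  have hrew : ∀ j ∈ Finset.range m,
      Complex.exp (Complex.I * (Real.pi : ℂ) * (d : ℂ) * ((binCenter m j : ℝ) : ℂ))
        = Complex.exp (Complex.I * Real.pi * d * (-1 + 1 / m)) *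
          Complex.exp (Complex.I * (2 * Real.pi * d) / m) ^ j := by
    intro j hj
    rw [← Complex.exp_nat_mul, ← Complex.exp_add]
    congr 1
    have hb : ((binCenter m j : ℝ) : ℂ) = -1 + (2 * j + 1) / m := by
      simp only [binCenter]; push_cast; ring
    rw [hb]; field_simp; ring
  rw [Finset.sum_congr rfl hrew, ← Finset.mul_sum]
  have h2πI : (2 : ℂ) * Real.pi * Complex.I ≠ 0 := by
    simp [Real.pi_ne_zero, Complex.I_ne_zero]
  have hω : Complex.exp (Complex.I * (2 * Real.pi * d) / m) ≠ 1 := by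
    intro h
    rw [Complex.exp_eq_one_iff] at h
    obtain ⟨n, hn⟩ := h
    have key : (2 : ℂ) * Real.pi * Complex.I * ((d : ℂ) / m) = 2 * Real.pi * Complex.I * n := by
      linear_combination hn
    have hdn : (d : ℂ) / m = n := mul_left_cancel₀ h2πI key
    rw [div_eq_iff hm0] at hdn
    have hdz : d = n * m := by exact_mod_cast hdn
    have : (m : ℤ) ∣ d := ⟨n, by linarith [hdz]⟩
    have hle : m ≤ d.natAbs := by
      have := Int.natAbs_dvd_natAbs.mpr this
      simpa using Nat.le_of_dvd (Int.natAbs_pos.mpr hd) this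
    omega
  have hωm : Complex.exp (Complex.I * (2 * Real.pi * d) / m) ^ m = 1 := by
    rw [← Complex.exp_nat_mul]
    have : (m : ℂ) * (Complex.I * (2 * Real.pi * d) / m) = d * (2 * Real.pi * Complex.I) := by
      field_simp
    rw [this, Complex.exp_int_mul_two_pi_mul_I]
  rw [geom_sum_eq hω, hωm]
  simp

lemma sum_exp_ortho_aux (m N : ℕ) (hNm : 2 * N < m) (k l : ℤ)
    (hk : k ∈ Finset.Icc (-(N : ℤ)) (N : ℤ)) (hl : l ∈ Finset.Icc (-(N : ℤ)) (N : ℤ)) :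
    ∑ j ∈ Finset.range m,
      Complex.exp (Complex.I * (Real.pi : ℂ) * ((k - l : ℤ) : ℂ) * ((binCenter m j : ℝ) : ℂ))
      = if k = l then (m : ℂ) else 0 := by
  simp only [Finset.mem_Icc] at hk hl
  by_cases h : k = l
  · simp [h]
  · rw [if_neg h]
    exact sum_exp_zero_aux m (by omega) (k - l) (by omega) (by omega)

lemma parseval_aux (m N : ℕ) (hNm : 2 * N < m) (c : ℤ → ℂ) :
    ∑ j ∈ Finset.range m,
      ‖(∑ k ∈ Finset.Icc (-(N : ℤ)) (N : ℤ),
        c k * Complex.exp (Complex.I * (Real.pi : ℂ) * (k : ℂ) * ((binCenter m j : ℝ) : ℂ)))‖ ^ 2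
      = (m : ℝ) * ∑ k ∈ Finset.Icc (-(N : ℤ)) (N : ℤ), ‖c k‖ ^ 2 := by
  set e : ℤ → ℕ → ℂ := fun k j =>
    Complex.exp (Complex.I * (Real.pi : ℂ) * (k : ℂ) * ((binCenter m j : ℝ) : ℂ)) with he
  have key : ∑ j ∈ Finset.range m,
      ((∑ k ∈ Finset.Icc (-(N : ℤ)) (N : ℤ), c k * e k j) *
       (starRingEnd ℂ) (∑ k ∈ Finset.Icc (-(N : ℤ)) (N : ℤ), c k * e k j))
      = (m : ℂ) * ∑ k ∈ Finset.Icc (-(N : ℤ)) (N : ℤ), c k * (starRingEnd ℂ) (c k) := by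
    have expand : ∀ j : ℕ,
        (∑ k ∈ Finset.Icc (-(N : ℤ)) (N : ℤ), c k * e k j) *
        (starRingEnd ℂ) (∑ k ∈ Finset.Icc (-(N : ℤ)) (N : ℤ), c k * e k j)
        = ∑ k ∈ Finset.Icc (-(N : ℤ)) (N : ℤ), ∑ l ∈ Finset.Icc (-(N : ℤ)) (N : ℤ),
            (c k * (starRingEnd ℂ) (c l)) *
              Complex.exp (Complex.I * (Real.pi : ℂ) * ((k - l : ℤ) : ℂ)
                * ((binCenter m j : ℝ) : ℂ)) := by
      intro j
      rw [map_sum, Finset.sum_mul_sum]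
      refine Finset.sum_congr rfl fun k _ => Finset.sum_congr rfl fun l _ => ?_
      simp only [he, map_mul]
      rw [← Complex.exp_conj]
      rw [show (starRingEnd ℂ) (Complex.I * (Real.pi : ℂ) * (l : ℂ) * ((binCenter m j : ℝ) : ℂ))
            = -(Complex.I * (Real.pi : ℂ) * (l : ℂ) * ((binCenter m j : ℝ) : ℂ)) by
          simp only [map_mul, Complex.conj_I, Complex.conj_ofReal, map_intCast]; ring_nf]
      rw [mul_mul_mul_comm, ← Complex.exp_add]
      congr 1
      push_cast
      ring
    calc ∑ j ∈ Finset.range m,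
          ((∑ k ∈ Finset.Icc (-(N : ℤ)) (N : ℤ), c k * e k j) *
           (starRingEnd ℂ) (∑ k ∈ Finset.Icc (-(N : ℤ)) (N : ℤ), c k * e k j))
        = ∑ k ∈ Finset.Icc (-(N : ℤ)) (N : ℤ), ∑ l ∈ Finset.Icc (-(N : ℤ)) (N : ℤ),
            (c k * (starRingEnd ℂ) (c l)) *
            ∑ j ∈ Finset.range m,
              Complex.exp (Complex.I * (Real.pi : ℂ) * ((k - l : ℤ) : ℂ)
                * ((binCenter m j : ℝ) : ℂ)) := by
          rw [Finset.sum_congr rfl fun j _ => expand j, Finset.sum_comm]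
          refine Finset.sum_congr rfl fun k _ => ?_
          rw [Finset.sum_comm]
          exact Finset.sum_congr rfl fun l _ => (Finset.mul_sum _ _ _).symm
      _ = (m : ℂ) * ∑ k ∈ Finset.Icc (-(N : ℤ)) (N : ℤ), c k * (starRingEnd ℂ) (c k) := by
          rw [Finset.mul_sum]
          refine Finset.sum_congr rfl fun k hk => ?_
          rw [Finset.sum_congr rfl fun l hl => by
            rw [sum_exp_ortho_aux m N hNm k l hk hl]]
          simp only [mul_ite, mul_zero, Finset.sum_ite_eq, hk, if_pos]
          ring
  have key' : (((∑ j ∈ Finset.range m,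
      Complex.normSq (∑ k ∈ Finset.Icc (-(N : ℤ)) (N : ℤ), c k * e k j) : ℝ)) : ℂ)
      = (((m : ℝ) * ∑ k ∈ Finset.Icc (-(N : ℤ)) (N : ℤ), Complex.normSq (c k) : ℝ) : ℂ) := by
    push_cast
    simp only [← Complex.mul_conj]
    exact key
  have := Complex.ofReal_injective key'
  simp only [Complex.sq_norm]
  exact this

lemma contFilter_continuous_aux (m : ℕ) (σ : ℝ) : Continuous (contFilter m σ) := by
  unfold contFilter G
  fun_prop

lemma integrand_continuous_aux (m : ℕ) (σ : ℝ) (k : ℤ) :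
    Continuous fun u : ℝ => (contFilter m σ u : ℂ) *
      Complex.exp (-(Complex.I) * (Real.pi : ℂ) * (k : ℂ) * (u : ℂ)) := by
  have := contFilter_continuous_aux m σ
  fun_prop

lemma conv_eq_aux (m N : ℕ) (σ : ℝ) (a : ℤ → ℂ) (z : ℝ) :
    (∫ u in (-2 : ℝ)..2, (contFilter m σ u : ℂ) * truncFourier a N (z - u))
      = ∑ k ∈ Finset.Icc (-(N : ℤ)) (N : ℤ),
          (a k * Complex.exp (Complex.I * (Real.pi : ℂ) * (k : ℂ) * (z : ℂ))) *
            ∫ u in (-2 : ℝ)..2, (contFilter m σ u : ℂ) *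
              Complex.exp (-(Complex.I) * (Real.pi : ℂ) * (k : ℂ) * (u : ℂ)) := by
  have hpt : ∀ u : ℝ, (contFilter m σ u : ℂ) * truncFourier a N (z - u)
      = ∑ k ∈ Finset.Icc (-(N : ℤ)) (N : ℤ),
          (a k * Complex.exp (Complex.I * (Real.pi : ℂ) * (k : ℂ) * (z : ℂ))) *
            ((contFilter m σ u : ℂ) *
              Complex.exp (-(Complex.I) * (Real.pi : ℂ) * (k : ℂ) * (u : ℂ))) := by
    intro u
    unfold truncFourier
    rw [Finset.mul_sum]
    refine Finset.sum_congr rfl fun k _ => ?_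
    rw [show Complex.I * (Real.pi : ℂ) * (k : ℂ) * ((z - u : ℝ) : ℂ)
          = Complex.I * (Real.pi : ℂ) * (k : ℂ) * (z : ℂ)
            + -(Complex.I) * (Real.pi : ℂ) * (k : ℂ) * (u : ℂ) by push_cast; ring]
    rw [Complex.exp_add]
    ring
  rw [intervalIntegral.integral_congr (g :=
      fun u => ∑ k ∈ Finset.Icc (-(N : ℤ)) (N : ℤ),
          (a k * Complex.exp (Complex.I * (Real.pi : ℂ) * (k : ℂ) * (z : ℂ))) *
            ((contFilter m σ u : ℂ) *
              Complex.exp (-(Complex.I) * (Real.pi : ℂ) * (k : ℂ) * (u : ℂ))))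
      (fun u _ => hpt u)]
  rw [intervalIntegral.integral_finset_sum]
  · exact Finset.sum_congr rfl fun k _ => intervalIntegral.integral_const_mul _ _
  · intro k _
    exact (continuous_const.mul (integrand_continuous_aux m σ k)).intervalIntegrable _ _

/-- key ℓ² identity in Lemma B.4: for `N < m/2`,
`∑_{j=0}^{m-1} |B f_N(b_j) - (g̃_σ ∗ f_N)(b_j)|² = m ∑_{k=-N}^{N} |a_k|² |B - ĥ_{σ,k}|²`,
where `ĥ_{σ,k} = ∫_{-2}^{2} g̃_σ(u) e^{-iπku} du`. -/
theorem l2_identity_filtered_trigPoly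
    (m N : ℕ) (hN : 0 < N) (hNm : 2 * N < m) (σ : ℝ) (hσ : 0 < σ) (B : ℝ)
    (a : ℤ → ℂ) (hconj : ∀ k : ℤ, a (-k) = starRingEnd ℂ (a k)) :
    ∑ j ∈ Finset.range m,
        ‖((B : ℂ) * truncFourier a N (binCenter m j)
          - ∫ u in (-2 : ℝ)..2,
              (contFilter m σ u : ℂ) * truncFourier a N (binCenter m j - u))‖ ^ 2 =
      (m : ℝ) * ∑ k ∈ Finset.Icc (-(N : ℤ)) (N : ℤ),
        ‖a k‖ ^ 2 *
          ‖((B : ℂ) - ∫ u in (-2 : ℝ)..2,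
              (contFilter m σ u : ℂ) *
                Complex.exp (-(Complex.I) * (Real.pi : ℂ) * (k : ℂ) * (u : ℂ)))‖ ^ 2 := by
  have key : ∀ j : ℕ,
      (B : ℂ) * truncFourier a N (binCenter m j) -
        (∫ u in (-2 : ℝ)..2, (contFilter m σ u : ℂ) * truncFourier a N (binCenter m j - u))
      = ∑ k ∈ Finset.Icc (-(N : ℤ)) (N : ℤ),
          (a k * ((B : ℂ) - ∫ u in (-2 : ℝ)..2, (contFilter m σ u : ℂ) *
              Complex.exp (-(Complex.I) * (Real.pi : ℂ) * (k : ℂ) * (u : ℂ)))) *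
            Complex.exp (Complex.I * (Real.pi : ℂ) * (k : ℂ) * ((binCenter m j : ℝ) : ℂ)) := by
    intro j
    rw [conv_eq_aux]
    unfold truncFourier
    rw [Finset.mul_sum, ← Finset.sum_sub_distrib]
    refine Finset.sum_congr rfl fun k _ => ?_
    ring
  calc ∑ j ∈ Finset.range m,
        ‖((B : ℂ) * truncFourier a N (binCenter m j)
          - ∫ u in (-2 : ℝ)..2,
              (contFilter m σ u : ℂ) * truncFourier a N (binCenter m j - u))‖ ^ 2
      = ∑ j ∈ Finset.range m,
        ‖(∑ k ∈ Finset.Icc (-(N : ℤ)) (N : ℤ),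
          (a k * ((B : ℂ) - ∫ u in (-2 : ℝ)..2, (contFilter m σ u : ℂ) *
              Complex.exp (-(Complex.I) * (Real.pi : ℂ) * (k : ℂ) * (u : ℂ)))) *
            Complex.exp (Complex.I * (Real.pi : ℂ) * (k : ℂ) * ((binCenter m j : ℝ) : ℂ)))‖ ^ 2 := by
        exact Finset.sum_congr rfl fun j _ => by rw [key j]
    _ = (m : ℝ) * ∑ k ∈ Finset.Icc (-(N : ℤ)) (N : ℤ),
          ‖(a k * ((B : ℂ) - ∫ u in (-2 : ℝ)..2, (contFilter m σ u : ℂ) *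
              Complex.exp (-(Complex.I) * (Real.pi : ℂ) * (k : ℂ) * (u : ℂ))))‖ ^ 2 :=
        parseval_aux m N hNm _
    _ = (m : ℝ) * ∑ k ∈ Finset.Icc (-(N : ℤ)) (N : ℤ),
          ‖a k‖ ^ 2 *
            ‖((B : ℂ) - ∫ u in (-2 : ℝ)..2,
              (contFilter m σ u : ℂ) *
                Complex.exp (-(Complex.I) * (Real.pi : ℂ) * (k : ℂ) * (u : ℂ)))‖ ^ 2 := by
        congr 1
        exact Finset.sum_congr rfl fun k _ => by rw [norm_mul, mul_pow]
end
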